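/- Spectrum of the Fourier blocks: For the homogeneous model on 𝒢^d_n (all weights equal to x > 0) and every p ∈ 𝒢^d_n, the eigenvalues of the 2d×2d matrix Λ̂^d_n(p) are x and −x, each with multiplicity d−1, and the two roots of t² − 2·a_p·x·t + (2d−1)·x² = 0, namely x·(2d−1)/(a_p ± √(a_p² − 2d + 1)), each with multiplicity 1, where a_p = Σ_{i=1}^d cos(2πp_i/n); equivalently, the characteristic polynomial of Λ̂^d_n(p) is (t−x)^{d−1}·(t+x)^{d−1}·(t² − 2·a_p·x·t + (2d−1)·x²). -/

import Mathlib

noncomputable section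

/-- The Fourier block `Λ̂^d_n(p)`: the `2d × 2d` complex matrix indexed by the signed
unit direction vectors `(j, s)` (direction `j ∈ Fin d`, sign `s : Bool`, `true` = `+`),
with entry `x_j · exp((2πi/n) p·v)` between `v` and `u` whenever `u ≠ -v`,
and `0` otherwise. Momenta `p ∈ 𝒢^d_n` are represented as elements of `Fin d → Fin n`. -/
def hatLambda (d n : ℕ) (x : Fin d → ℝ) (p : Fin d → Fin n) :
    Matrix (Fin d × Bool) (Fin d × Bool) ℂ := fun v u =>
  if u = (v.1, !v.2) then 0
  else (x v.1 : ℂ) *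
    Complex.exp (2 * Real.pi * Complex.I * ((p v.1 : ℕ) : ℂ) *
      (if v.2 then 1 else -1) / (n : ℂ))

open scoped Matrix

/-- phase vector -/
def Evec (d n : ℕ) (p : Fin d → Fin n) : Fin d × Bool → ℂ := fun v =>
  Complex.exp (2 * Real.pi * Complex.I * ((p v.1 : ℕ) : ℂ) *
      (if v.2 then 1 else -1) / (n : ℂ))

lemma Evec_mul (d n : ℕ) (p : Fin d → Fin n) (j : Fin d) (s : Bool) :
    Evec d n p (j, s) * Evec d n p (j, !s) = 1 := by
  unfold Evec
  rw [← Complex.exp_add, ← Complex.exp_zero]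
  congr 1
  cases s <;> simp <;> ring

lemma Evec_sum (d n : ℕ) (p : Fin d → Fin n) (j : Fin d) :
    Evec d n p (j, true) + Evec d n p (j, false) =
      2 * ((Real.cos (2 * Real.pi * ((p j : ℕ) : ℝ) / (n : ℝ)) : ℝ) : ℂ) := by
  unfold Evec
  simp only [if_true, Bool.false_eq_true, if_false]
  rw [Complex.ofReal_cos, Complex.two_cos]
  congr 1
  · congr 1; push_cast; ring
  · congr 1; push_cast; ring

def Nblk (d n : ℕ) (p : Fin d → Fin n) (x : ℝ) (t : ℂ) : Fin d → Matrix Bool Bool ℂ :=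
  fun j => Matrix.of fun s r => if r = s then t else (x : ℂ) * Evec d n p (j, s)

def Nblk' (d n : ℕ) (p : Fin d → Fin n) (x : ℝ) (t : ℂ) : Fin d → Matrix Bool Bool ℂ :=
  fun j => Matrix.of fun s r =>
    if r = s then t / (t ^ 2 - (x : ℂ) ^ 2)
    else -((x : ℂ) * Evec d n p (j, s)) / (t ^ 2 - (x : ℂ) ^ 2)

lemma Nmul (d n : ℕ) (p : Fin d → Fin n) (x : ℝ) (t : ℂ)
    (hD : t ^ 2 - (x : ℂ) ^ 2 ≠ 0) (j : Fin d) :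
    Nblk d n p x t j * Nblk' d n p x t j = 1 := by
  have h2 := Evec_mul d n p j false
  simp only [Bool.not_false] at h2
  have hne : Evec d n p (j, true) ≠ 0 := Complex.exp_ne_zero _
  have hEf : Evec d n p (j, false) = (Evec d n p (j, true))⁻¹ :=
    eq_inv_of_mul_eq_one_left h2
  ext s r
  rw [Matrix.mul_apply, Fintype.sum_bool]
  cases s <;> cases r <;>
    simp [Nblk, Nblk', Matrix.one_apply, hEf] <;> field_simp <;> ring

lemma Ndet (d n : ℕ) (p : Fin d → Fin n) (x : ℝ) (t : ℂ) (j : Fin d) :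
    (Nblk d n p x t j).det = t ^ 2 - (x : ℂ) ^ 2 := by
  have h1 := Evec_mul d n p j true
  simp only [Bool.not_true] at h1
  rw [← Matrix.det_submatrix_equiv_self finTwoEquiv, Matrix.det_fin_two]
  simp [Nblk, finTwoEquiv]
  linear_combination (-(x:ℂ)^2) * h1

lemma key (d n : ℕ) (hd : 1 ≤ d) (x : ℝ) (p : Fin d → Fin n) (t : ℂ)
    (ht1 : t ≠ (x : ℂ)) (ht2 : t ≠ -(x : ℂ)) :
    Matrix.det (t • (1 : Matrix (Fin d × Bool) (Fin d × Bool) ℂ) -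
        hatLambda d n (fun _ => x) p) =
      (t - (x : ℂ)) ^ (d - 1) * (t + (x : ℂ)) ^ (d - 1) *
        (t ^ 2 -
          2 * ((∑ i, Real.cos (2 * Real.pi * ((p i : ℕ) : ℝ) / (n : ℝ)) : ℝ) : ℂ) *
            (x : ℂ) * t +
          (2 * (d : ℂ) - 1) * (x : ℂ) ^ 2) := by
  have hD : t ^ 2 - (x : ℂ) ^ 2 ≠ 0 := by
    have h3 : t + (x : ℂ) ≠ 0 := fun h => ht2 (by linear_combination h)
    have h4 := mul_ne_zero (sub_ne_zero.mpr ht1) h3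
    intro h; exact h4 (by linear_combination h)
  set e : Fin d × Bool ≃ Bool × Fin d := Equiv.prodComm (Fin d) Bool with he
  set A := (Matrix.blockDiagonal (Nblk d n p x t)).submatrix e e with hA
  set A' := (Matrix.blockDiagonal (Nblk' d n p x t)).submatrix e e with hA'
  have hAA' : A * A' = 1 := by
    rw [hA, hA', Matrix.submatrix_mul_equiv, ← Matrix.blockDiagonal_mul]
    have : (fun j => Nblk d n p x t j * Nblk' d n p x t j) = (1 : Fin d → Matrix Bool Bool ℂ) :=
      funext fun j => Nmul d n p x t hD j
    rw [this, Matrix.blockDiagonal_one, Matrix.submatrix_one_equiv]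
  have hdetA : A.det = (t ^ 2 - (x : ℂ) ^ 2) ^ d := by
    rw [hA, Matrix.det_submatrix_equiv_self, Matrix.det_blockDiagonal]
    simp [Ndet]
  have hsplit : t • (1 : Matrix (Fin d × Bool) (Fin d × Bool) ℂ) -
      hatLambda d n (fun _ => x) p =
      A + Matrix.replicateCol Unit (fun v => -((x : ℂ) * Evec d n p v)) *
        Matrix.replicateRow Unit (fun _ => (1 : ℂ)) := by
    ext ⟨j, s⟩ ⟨k, r⟩
    simp only [Matrix.sub_apply, Matrix.add_apply, Matrix.smul_apply, Matrix.one_apply,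
      hatLambda, Matrix.mul_apply, Finset.univ_unique, Finset.sum_singleton,
      Matrix.replicateCol_apply, Matrix.replicateRow_apply, hA, Matrix.submatrix_apply, he,
      Equiv.prodComm_apply, Prod.swap_prod_mk, Matrix.blockDiagonal_apply, smul_eq_mul]
    by_cases hjk : j = k
    · subst hjk
      cases s <;> cases r <;> simp [Nblk, Evec, Prod.ext_iff] <;> ring
    · have h5 : ¬((k, r) = (j, !s)) := by simp [Prod.ext_iff, Ne.symm hjk]
      have h6 : ¬((j, s) = (k, r)) := by simp [Prod.ext_iff, hjk]
      rw [if_neg h6, if_neg h5, if_neg hjk]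
      simp only [Evec]
      ring
  have hIsUnit : IsUnit A.det := by
    rw [hdetA]; exact isUnit_iff_ne_zero.mpr (pow_ne_zero d hD)
  rw [hsplit, Matrix.det_add_replicateCol_mul_replicateRow hIsUnit, Matrix.inv_eq_right_inv hAA',
    Matrix.det_unique (1 + Matrix.replicateRow Unit (fun _ => (1 : ℂ)) * A' *
      Matrix.replicateCol Unit fun v => -((x : ℂ) * Evec d n p v)),
    Matrix.add_apply, Matrix.one_apply_eq, Matrix.mul_assoc,
    ← Matrix.replicateCol_mulVec, Matrix.replicateRow_mul_replicateCol_apply]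
  have hmv : ∀ (j : Fin d) (s : Bool),
      (A' *ᵥ (fun v => -((x : ℂ) * Evec d n p v))) (j, s) =
        -((t * x * Evec d n p (j, s) - (x : ℂ) ^ 2) / (t ^ 2 - (x : ℂ) ^ 2)) := by
    intro j s
    simp only [Matrix.mulVec, dotProduct, hA', Matrix.submatrix_apply, he,
      Equiv.prodComm_apply, Prod.swap_prod_mk, Matrix.blockDiagonal_apply,
      Fintype.sum_prod_type]
    rw [Finset.sum_eq_single j]
    · simp only [if_pos rfl, Fintype.sum_bool]
      have hne : Evec d n p (j, true) ≠ 0 := Complex.exp_ne_zero _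
      have hEf : Evec d n p (j, false) = (Evec d n p (j, true))⁻¹ := by
        have h2 := Evec_mul d n p j true
        simp only [Bool.not_true] at h2
        exact eq_inv_of_mul_eq_one_right h2
      cases s <;>
        simp only [Nblk', Matrix.of_apply, Bool.not_true, Bool.not_false, hEf, if_true, Bool.false_eq_true, Bool.true_eq_false, if_false] <;>
        field_simp <;> ring
    · intro b _ hb
      simp [Ne.symm hb]
    · intro h; exact absurd (Finset.mem_univ j) h
  have hdot : (fun _ : Fin d × Bool => (1 : ℂ)) ⬝ᵥ
      (A' *ᵥ (fun v => -((x : ℂ) * Evec d n p v))) =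
      (2 * (d : ℂ) * (x : ℂ) ^ 2 -
        2 * t * x * (∑ j, ((Real.cos (2 * Real.pi * ((p j : ℕ) : ℝ) / (n : ℝ)) : ℝ) : ℂ))) /
        (t ^ 2 - (x : ℂ) ^ 2) := by
    simp only [dotProduct, one_mul]
    rw [Fintype.sum_prod_type]
    have hterm : ∀ j : Fin d, (∑ s : Bool,
        (A' *ᵥ (fun v => -((x : ℂ) * Evec d n p v))) (j, s)) =
        (2 * (x : ℂ) ^ 2 - 2 * t * x *
          ((Real.cos (2 * Real.pi * ((p j : ℕ) : ℝ) / (n : ℝ)) : ℝ) : ℂ)) /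
          (t ^ 2 - (x : ℂ) ^ 2) := by
      intro j
      rw [Fintype.sum_bool, hmv j true, hmv j false]
      have hsum := Evec_sum d n p j
      linear_combination (-(t * (x : ℂ)) / (t ^ 2 - (x : ℂ) ^ 2)) * hsum
    rw [Finset.sum_congr rfl fun j _ => hterm j, ← Finset.sum_div]
    congr 1
    rw [Finset.sum_sub_distrib, Finset.sum_const, ← Finset.mul_sum]
    simp [Finset.card_univ, nsmul_eq_mul]
    ring
  rw [hdetA, hdot]
  have hpow : (t ^ 2 - (x : ℂ) ^ 2) ^ d =
      (t ^ 2 - (x : ℂ) ^ 2) ^ (d - 1) * (t ^ 2 - (x : ℂ) ^ 2) := by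
    rw [← pow_succ, Nat.sub_add_cancel hd]
  have hfac : (t - (x : ℂ)) ^ (d - 1) * (t + (x : ℂ)) ^ (d - 1) =
      (t ^ 2 - (x : ℂ) ^ 2) ^ (d - 1) := by
    rw [← mul_pow]
    congr 1
    ring
  rw [hpow, hfac, mul_assoc]
  congr 1
  field_simp
  push_cast; ring

/-- **Spectrum of the Fourier blocks** (Lemma 5.7 / `lem:spectrum`), in the equivalent
characteristic-polynomial form: for the homogeneous model (`x_j ≡ x`), for every
`t : ℂ`,
`det(t·Id - Λ̂^d_n(p)) = (t-x)^{d-1} (t+x)^{d-1} (t² - 2 a_p x t + (2d-1)x²)`,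
where `a_p = Σ_i cos(2π p_i / n)`; i.e. the eigenvalues of `Λ̂^d_n(p)` are `±x`, each
with multiplicity `d-1`, and the two roots `x(2d-1)/(a_p ± √(a_p² - 2d + 1))` of the
quadratic factor, each with multiplicity `1`. -/
theorem charpoly_hatLambda (d n : ℕ) (hd : 1 ≤ d) (hn : 1 ≤ n)
    (x : ℝ) (hx : 0 < x) (p : Fin d → Fin n) (t : ℂ) :
    Matrix.det (t • (1 : Matrix (Fin d × Bool) (Fin d × Bool) ℂ) -
        hatLambda d n (fun _ => x) p) =
      (t - (x : ℂ)) ^ (d - 1) * (t + (x : ℂ)) ^ (d - 1) *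
        (t ^ 2 -
          2 * ((∑ i, Real.cos (2 * Real.pi * ((p i : ℕ) : ℝ) / (n : ℝ)) : ℝ) : ℂ) *
            (x : ℂ) * t +
          (2 * (d : ℂ) - 1) * (x : ℂ) ^ 2) := by
  have hfc : Continuous fun s : ℂ => Matrix.det (s • (1 : Matrix (Fin d × Bool) (Fin d × Bool) ℂ) -
      hatLambda d n (fun _ => x) p) := by
    apply Continuous.matrix_det
    exact (continuous_id.smul continuous_const).sub continuous_const
  have hgc : Continuous fun s : ℂ =>
      (s - (x : ℂ)) ^ (d - 1) * (s + (x : ℂ)) ^ (d - 1) *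
        (s ^ 2 -
          2 * ((∑ i, Real.cos (2 * Real.pi * ((p i : ℕ) : ℝ) / (n : ℝ)) : ℝ) : ℂ) *
            (x : ℂ) * s +
          (2 * (d : ℂ) - 1) * (x : ℂ) ^ 2) := by fun_prop
  have hdense : Dense (({(x : ℂ), -(x : ℂ)} : Set ℂ)ᶜ) :=
    (((Set.finite_singleton (-(x : ℂ))).insert ((x : ℂ))).countable).dense_compl ℂ
  have heq := Continuous.ext_on hdense hfc hgc ?_
  · exact congrFun heq t
  · intro s hs
    simp only [Set.mem_compl_iff, Set.mem_insert_iff, Set.mem_singleton_iff] at hs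
    push_neg at hs
    exact key d n hd x p s hs.1 hs.2

end
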